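/- Let u and a be rational numbers with u > 0. Then the real number u^a belongs to 𝒞, i.e., there is a generalized continued fraction of polynomial type converging to u^a. -/

import Mathlib

/-- Numerators of the generalized continued fraction with partial
quotients `a` and partial numerators `b`:
`p₀ = a 0`, `p₁ = a 1 * a 0 + b 0`, `pₙ = a n * pₙ₋₁ + b (n-1) * pₙ₋₂`. -/
def cfP (a b : ℕ → ℚ) : ℕ → ℚ
  | 0 => a 0
  | 1 => a 1 * a 0 + b 0
  | n + 2 => a (n + 2) * cfP a b (n + 1) + b (n + 1) * cfP a b n

/-- Denominators of the generalized continued fraction: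
`q₀ = 1`, `q₁ = a 1`, `qₙ = a n * qₙ₋₁ + b (n-1) * qₙ₋₂`. -/
def cfQ (a b : ℕ → ℚ) : ℕ → ℚ
  | 0 => 1
  | 1 => a 1
  | n + 2 => a (n + 2) * cfQ a b (n + 1) + b (n + 1) * cfQ a b n

/-- The generalized continued fraction `a(0) + b(0)/(a(1) + b(1)/(a(2) + ⋯))`
converges to the real number `u`. -/
def CFConvergesTo (a b : ℕ → ℚ) (u : ℝ) : Prop :=
  (∀ n, b n ≠ 0) ∧ (∃ N, ∀ n ≥ N, cfQ a b n ≠ 0) ∧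
  Filter.Tendsto (fun n : ℕ => ((cfP a b n : ℝ) / (cfQ a b n : ℝ)))
    Filter.atTop (nhds u)

/-- The continued fraction has coefficients given by polynomials for all
sufficiently large indices. -/
def CFPolyType (a b : ℕ → ℚ) : Prop :=
  ∃ (A B : Polynomial ℚ) (N : ℕ), ∀ n ≥ N,
    a n = A.eval (n : ℚ) ∧ b n = B.eval (n : ℚ)

/-- A real number is of continued fraction type (belongs to `𝒞`) if some
generalized continued fraction of polynomial type converges to it. -/
def CFType (u : ℝ) : Prop :=
  ∃ a b : ℕ → ℚ, CFPolyType a b ∧ CFConvergesTo a b u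


open Filter Finset Real


noncomputable def binCoef (α : ℝ) (k : ℕ) : ℝ := (∏ i ∈ Finset.range k, (α - i)) / k.factorial

lemma binCoef_zero (α : ℝ) : binCoef α 0 = 1 := by simp [binCoef]

lemma binCoef_succ (α : ℝ) (k : ℕ) :
    binCoef α (k + 1) = binCoef α k * (α - k) / (k + 1) := by
  have h1 : ((k.factorial : ℝ)) ≠ 0 := Nat.cast_ne_zero.mpr k.factorial_ne_zero
  have h2 : ((k:ℝ) + 1) ≠ 0 := by positivity
  unfold binCoef
  rw [Finset.prod_range_succ, Nat.factorial_succ]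
  push_cast
  rw [div_mul_eq_mul_div, div_div, mul_comm ((k:ℝ)+1)]

lemma binCoef_ne_zero {α : ℝ} (hα : ∀ k : ℕ, α ≠ (k : ℝ)) : ∀ k, binCoef α k ≠ 0 := by
  intro k
  induction k with
  | zero => simp [binCoef_zero]
  | succ n ih =>
      rw [binCoef_succ]
      have h2 : ((n:ℝ) + 1) ≠ 0 := by positivity
      exact div_ne_zero (mul_ne_zero ih (sub_ne_zero.mpr (hα n))) h2

theorem binomial_hasSum {α : ℝ} (hα : ∀ k : ℕ, α ≠ (k : ℝ)) {x : ℝ} (hx : |x| < 1) :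
    HasSum (fun k : ℕ => binCoef α k * x ^ k) ((1 + x) ^ α) := by
  set r : ℝ := (1 + |x|) / 2 with hr_def
  have hr0 : 0 < r := by positivity
  have hr1 : r < 1 := by rw [hr_def]; linarith
  have hxr : |x| < r := by rw [hr_def]; linarith
  set t : Set ℝ := Set.Ioo (-r) r with ht_def
  have hmem : ∀ y : ℝ, |y| < r → y ∈ t := by
    intro y hy
    exact abs_lt.mp hy |>.imp id id |> fun h => ⟨h.1, h.2⟩
  have hx_t : x ∈ t := hmem x hxr
  have h0_t : (0:ℝ) ∈ t := hmem 0 (by simpa using hr0)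
  have habs : ∀ y ∈ t, |y| ≤ r := fun y hy => le_of_lt (abs_lt.mpr ⟨hy.1, hy.2⟩)
  -- the terms and their derivatives
  set g : ℕ → ℝ → ℝ := fun k y => binCoef α k * y ^ k with hg_def
  set g' : ℕ → ℝ → ℝ := fun k y => binCoef α k * (k * y ^ (k - 1)) with hg'_def
  have hg : ∀ k y, HasDerivAt (g k) (g' k y) y := fun k y => (hasDerivAt_pow k y).const_mul _
  set u : ℕ → ℝ := fun k => |binCoef α k| * k * r ^ (k - 1) with hu_def
  have hbound : ∀ (k : ℕ), ∀ y ∈ t, ‖g' k y‖ ≤ u k := by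
    intro k y hy
    have : ‖g' k y‖ = |binCoef α k| * k * |y| ^ (k - 1) := by
      simp [hg'_def, abs_mul, abs_pow, Nat.abs_cast, mul_assoc]
    rw [this, hu_def]
    have hyr := habs y hy
    have hle : |y| ^ (k-1) ≤ r ^ (k-1) := pow_le_pow_left₀ (abs_nonneg y) hyr _
    show |binCoef α k| * ↑k * |y| ^ (k - 1) ≤ |binCoef α k| * ↑k * r ^ (k - 1)
    exact mul_le_mul_of_nonneg_left hle (by positivity)
  -- summability of the derivative bound
  have hu : Summable u := by
    set r' : ℝ := (1 + r) / 2 with hr'_def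
    have hrr' : r < r' := by rw [hr'_def]; linarith
    have hr'1 : r' < 1 := by rw [hr'_def]; linarith
    apply summable_of_ratio_norm_eventually_le hr'1
    filter_upwards [Filter.eventually_ge_atTop (⌈|α| * r / (r' - r)⌉₊ + 1)] with k hk
    have hk1 : 1 ≤ k := le_trans (Nat.le_add_left 1 _) hk
    have hkR : |α| * r / (r' - r) ≤ (k : ℝ) := by
      calc |α| * r / (r' - r) ≤ (⌈|α| * r / (r' - r)⌉₊ : ℝ) := Nat.le_ceil _
        _ ≤ (k : ℝ) := by exact_mod_cast Nat.le_of_succ_le hk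
    have hstep : |α| * r ≤ (r' - r) * k := by
      rw [div_le_iff₀ (by linarith)] at hkR
      linarith [hkR]
    have hu_succ : u (k + 1) = |binCoef α k| * |α - k| * r ^ k := by
      have : (k + 1 : ℕ) - 1 = k := rfl
      rw [hu_def]
      simp only [this]
      rw [binCoef_succ, abs_div, abs_mul]
      have : |((k:ℝ) + 1)| = (k:ℝ) + 1 := abs_of_pos (by positivity)
      push_cast
      rw [this]
      field_simp
    -- r^k = r * r^(k-1)
    obtain ⟨m, rfl⟩ := Nat.exists_eq_add_of_le hk1
    have hpow : r ^ (1 + m) = r * r ^ m := by rw [pow_add, pow_one]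
    have hsub : (1 + m) - 1 = m := by omega
    have hun : ∀ j : ℕ, ‖u j‖ = u j := by
      intro j
      rw [hu_def, Real.norm_eq_abs, abs_of_nonneg (by positivity)]
    rw [hun, hun, hu_succ]
    have hu_eq : u (1 + m) = |binCoef α (1+m)| * ((1+m:ℕ):ℝ) * r ^ m := by
      rw [hu_def]; simp only; rw [hsub]
    rw [hu_eq, hpow]
    have hαk : |α - ((1+m:ℕ):ℝ)| ≤ |α| + ((1+m:ℕ):ℝ) := by
      have h := abs_add_le α (-((1+m:ℕ):ℝ))
      rw [abs_neg, abs_of_nonneg (show (0:ℝ) ≤ ((1+m:ℕ):ℝ) by positivity)] at h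
      simpa [sub_eq_add_neg] using h
    have key : |α - ((1+m:ℕ):ℝ)| * r ≤ r' * ((1+m:ℕ):ℝ) := by
      have h1 : (|α| + ((1+m:ℕ):ℝ)) * r ≤ r' * ((1+m:ℕ):ℝ) := by
        have := hstep
        push_cast at this ⊢
        nlinarith [this]
      nlinarith [hαk, hr0.le]
    calc |binCoef α (1+m)| * |α - ((1+m:ℕ):ℝ)| * (r * r ^ m)
        = (|α - ((1+m:ℕ):ℝ)| * r) * (|binCoef α (1+m)| * r ^ m) := by ring
      _ ≤ (r' * ((1+m:ℕ):ℝ)) * (|binCoef α (1+m)| * r ^ m) := by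
          apply mul_le_mul_of_nonneg_right key (by positivity)
      _ = r' * (|binCoef α (1+m)| * ((1+m:ℕ):ℝ) * r ^ m) := by ring
  -- the sum function
  set f : ℝ → ℝ := fun y => ∑' k, g k y with hf_def
  have hg0 : Summable fun k => g k 0 := by
    apply summable_of_ne_finset_zero (s := {0})
    intro k hk
    have hk0 : k ≠ 0 := by simpa using hk
    simp [hg_def, zero_pow hk0]
  have ht_open : IsOpen t := isOpen_Ioo
  have ht_conn : IsPreconnected t := (convex_Ioo (-r) r).isPreconnected
  have hderiv : ∀ y ∈ t, HasDerivAt f (∑' k, g' k y) y := fun y hy =>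
    hasDerivAt_tsum_of_isPreconnected hu ht_open ht_conn (fun k y _ => hg k y)
      hbound h0_t hg0 hy
  have hsummable : ∀ y ∈ t, Summable fun k => g k y := fun y hy =>
    summable_of_summable_hasDerivAt_of_isPreconnected hu ht_open ht_conn
      (fun k y _ => hg k y) hbound h0_t hg0 hy
  have hg'summ : ∀ y ∈ t, Summable fun k => g' k y := fun y hy =>
    Summable.of_norm_bounded hu (fun k => hbound k y hy)
  -- the key differential identity
  have hkey : ∀ y ∈ t, (1 + y) * (∑' k, g' k y) = α * f y := by
    intro y hy
    have hs : HasSum (fun k => g' k y) (∑' k, g' k y) := (hg'summ y hy).hasSum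
    set s := ∑' k, g' k y with hs_def
    have h1 : HasSum (fun k : ℕ => (k : ℝ) * binCoef α k * y ^ k) (s * y) := by
      have hmul := hs.mul_right y
      have e : (fun k : ℕ => g' k y * y) = fun k : ℕ => (k : ℝ) * binCoef α k * y ^ k := by
        funext k
        cases k with
        | zero => simp [hg'_def]
        | succ n =>
            simp only [hg'_def, Nat.add_sub_cancel]
            push_cast
            ring
      rwa [e] at hmul
    have h2 : HasSum (fun k => g' (k + 1) y) s := by
      have h0 : g' 0 y = 0 := by simp [hg'_def]
      have := (hasSum_nat_add_iff' (f := fun k => g' k y) 1).mpr hs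
      simpa [h0] using this
    have h3 : (fun k => g' (k + 1) y)
        = fun k : ℕ => α * g k y - (k : ℝ) * binCoef α k * y ^ k := by
      funext k
      have hne : ((k : ℝ) + 1) ≠ 0 := by positivity
      simp only [hg'_def, hg_def, binCoef_succ, Nat.add_sub_cancel]
      push_cast
      field_simp
    rw [h3] at h2
    have h4 := h2.add h1
    have h5 : HasSum (fun k => α * g k y) (s + s * y) := by
      have e : (fun k : ℕ => α * g k y - (k : ℝ) * binCoef α k * y ^ k
          + (k : ℝ) * binCoef α k * y ^ k) = fun k : ℕ => α * g k y := by
        funext k; ring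
      rwa [e] at h4
    have h6 : HasSum (fun k => α * g k y) (α * f y) := ((hsummable y hy).hasSum).mul_left α
    have h7 := h5.unique h6
    calc (1 + y) * s = s + s * y := by ring
      _ = α * f y := h7
  have h1y : ∀ y ∈ t, (0 : ℝ) < 1 + y := by
    intro y hy
    have h1 : -r < y := hy.1
    have : (-1 : ℝ) ≤ -r := by linarith
    linarith
  -- φ has zero derivative
  have hφderiv : ∀ y ∈ t, HasDerivAt (fun w => f w * (1 + w) ^ (-α)) 0 y := by
    intro y hy
    have hy1 : (0 : ℝ) < 1 + y := h1y y hy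
    have hid : HasDerivAt (fun w : ℝ => 1 + w) 1 y := by
      simpa using (hasDerivAt_id y).const_add (1 : ℝ)
    have hrpow : HasDerivAt (fun w : ℝ => (1 + w) ^ (-α)) (-α * (1 + y) ^ (-α - 1)) y := by
      have h := (Real.hasDerivAt_rpow_const (x := 1 + y) (p := -α) (Or.inl (ne_of_gt hy1)))
      have h2 := HasDerivAt.comp y h hid
      exact h2.congr_deriv (by ring)
    have hmul := (hderiv y hy).mul hrpow
    refine hmul.congr_deriv ?_
    have hne : (1 + y) ≠ 0 := ne_of_gt hy1
    have hsval : (∑' k, g' k y) = α * f y * (1 + y)⁻¹ := by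
      have hk := hkey y hy
      field_simp
      linarith [hk]
    have hinv : (1 + y) ^ (-α - 1) = (1 + y) ^ (-α) * (1 + y)⁻¹ := by
      rw [Real.rpow_sub hy1, Real.rpow_one, div_eq_mul_inv]
    rw [hsval, hinv]
    ring
  -- constancy of φ
  have hφdiff : DifferentiableOn ℝ (fun w => f w * (1 + w) ^ (-α)) t := fun y hy =>
    ((hφderiv y hy).differentiableAt).differentiableWithinAt
  have hφfd : ∀ y ∈ t, fderivWithin ℝ (fun w => f w * (1 + w) ^ (-α)) t y = 0 := by
    intro y hy
    rw [fderivWithin_of_isOpen ht_open hy]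
    have hd := (hφderiv y hy).hasFDerivAt.fderiv
    rw [hd]
    ext z
    simp
  have hconst := (convex_Ioo (-r) r).is_const_of_fderivWithin_eq_zero hφdiff hφfd hx_t h0_t
  have hf0 : f 0 = 1 := by
    have : f 0 = g 0 0 := tsum_eq_single 0 (fun k hk => by simp [hg_def, zero_pow hk])
    rw [this]
    simp [hg_def, binCoef_zero]
  have h1x : (0 : ℝ) < 1 + x := h1y x hx_t
  have hφx : f x * (1 + x) ^ (-α) = 1 := by
    rw [hconst, hf0]
    norm_num
  have hfx : f x = (1 + x) ^ α := by
    rw [Real.rpow_neg h1x.le] at hφx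
    have hne : (1 + x) ^ α ≠ 0 := (Real.rpow_pos_of_pos h1x α).ne'
    field_simp at hφx
    exact hφx
  have hfinal := (hsummable x hx_t).hasSum
  rw [show (∑' k, g k x) = f x from rfl, hfx] at hfinal
  exact hfinal
-- ==================== CF part ====================

/-- term of the binomial series, rational version -/
def euT (α z : ℚ) : ℕ → ℚ
  | 0 => 1
  | n + 1 => euT α z n * (α - n) * z / (n + 1)

def euD : ℕ → ℚ
  | 0 => 1
  | 1 => 1
  | n + 2 => ((n : ℚ) + 2) * ((n : ℚ) + 1) * euD (n + 1)

def euA (α z : ℚ) : ℕ → ℚ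
  | 0 => 0
  | 1 => 1
  | n + 2 => ((n : ℚ) + 2) * ((n : ℚ) + 1) + ((n : ℚ) + 2) * (α - n) * z

def euB (α z : ℚ) : ℕ → ℚ
  | 0 => 1
  | 1 => -2 * α * z
  | n + 2 => -(((n : ℚ) + 3) * ((n : ℚ) + 2) * ((n : ℚ) + 1) * (α - ((n : ℚ) + 1)) * z)

lemma euD_pos : ∀ n, 0 < euD n := by
  intro n
  induction n using Nat.twoStepInduction with
  | zero => norm_num [euD]
  | one => norm_num [euD]
  | more n ih _ =>
      show 0 < ((n : ℚ) + 2) * ((n : ℚ) + 1) * euD (n + 1)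
      positivity

lemma cfQ_euD (α z : ℚ) : ∀ n, cfQ (euA α z) (euB α z) n = euD n := by
  intro n
  induction n using Nat.twoStepInduction with
  | zero => simp [cfQ, euD]
  | one => simp [cfQ, euD, euA]
  | more n ih1 ih2 =>
      show euA α z (n + 2) * cfQ (euA α z) (euB α z) (n + 1)
          + euB α z (n + 1) * cfQ (euA α z) (euB α z) n = euD (n + 2)
      rw [ih1, ih2]
      cases n with
      | zero => norm_num [euA, euB, euD]
      | succ m =>
          simp only [euA, euB, euD]
          push_cast
          ring

lemma cfP_euD (α z : ℚ) : ∀ n, cfP (euA α z) (euB α z) n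
    = euD n * ∑ k ∈ Finset.range n, euT α z k := by
  intro n
  induction n using Nat.twoStepInduction with
  | zero => simp [cfP, euA, euD]
  | one => simp [cfP, euA, euB, euD, euT]
  | more n ih1 ih2 =>
      show euA α z (n + 2) * cfP (euA α z) (euB α z) (n + 1)
          + euB α z (n + 1) * cfP (euA α z) (euB α z) n
          = euD (n + 2) * ∑ k ∈ Finset.range (n + 2), euT α z k
      rw [ih1, ih2]
      cases n with
      | zero =>
          simp [euA, euB, euD, euT, Finset.sum_range_succ]
          ring
      | succ m =>
          rw [Finset.sum_range_succ (n := m + 2), Finset.sum_range_succ (n := m + 1)]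
          simp only [euA, euB, euD, euT]
          have hm2 : ((m : ℚ) + 2) ≠ 0 := by positivity
          have hm1 : ((m : ℚ) + 1) ≠ 0 := by positivity
          push_cast
          field_simp
          ring

lemma euT_cast (α z : ℚ) : ∀ k, ((euT α z k : ℚ) : ℝ) = binCoef (α : ℝ) k * (z : ℝ) ^ k := by
  intro k
  induction k with
  | zero => simp [euT, binCoef_zero]
  | succ k ih =>
      rw [show euT α z (k + 1) = euT α z k * (α - k) * z / (k + 1) from rfl]
      push_cast
      rw [ih, binCoef_succ]
      have : ((k : ℝ) + 1) ≠ 0 := by positivity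
      field_simp
      ring


/-- Every nonzero rational is of continued fraction type. -/
def ratA : ℕ → ℚ
  | 0 => 0
  | 1 => 1
  | _ + 2 => 3/2

def ratB (r : ℚ) : ℕ → ℚ
  | 0 => r/2
  | _ + 1 => -(1/2)

lemma ratQ (r : ℚ) : ∀ n, cfQ ratA (ratB r) n = 1 := by
  intro n
  induction n using Nat.twoStepInduction with
  | zero => simp [cfQ]
  | one => simp [cfQ, ratA]
  | more n ih1 ih2 =>
      show ratA (n + 2) * cfQ ratA (ratB r) (n + 1) + ratB r (n + 1) * cfQ ratA (ratB r) n = 1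
      rw [ih1, ih2]
      norm_num [ratA, ratB]

lemma ratP (r : ℚ) : ∀ n, cfP ratA (ratB r) n = r * (1 - (1/2) ^ n) := by
  intro n
  induction n using Nat.twoStepInduction with
  | zero => simp [cfP, ratA]
  | one =>
      show ratA 1 * ratA 0 + ratB r 0 = _
      norm_num [ratA, ratB]
      ring
  | more n ih1 ih2 =>
      show ratA (n + 2) * cfP ratA (ratB r) (n + 1) + ratB r (n + 1) * cfP ratA (ratB r) n = _
      rw [ih1, ih2]
      show (3/2 : ℚ) * (r * (1 - (1/2) ^ (n+1))) + -(1/2) * (r * (1 - (1/2)^n)) = _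
      ring

lemma rat_CFType (r : ℚ) (hr : r ≠ 0) : CFType ((r : ℚ) : ℝ) := by
  refine ⟨ratA, ratB r, ⟨Polynomial.C (3/2), Polynomial.C (-(1/2)), 2, ?_⟩, ?_, ⟨0, ?_⟩, ?_⟩
  · intro n hn
    obtain ⟨k, rfl⟩ := Nat.exists_eq_add_of_le hn
    rw [Nat.add_comm]
    constructor
    · simp [ratA]
    · simp [ratB]
  · intro n
    cases n with
    | zero =>
        show r/2 ≠ 0
        exact div_ne_zero hr two_ne_zero
    | succ k =>
        show -(1/2 : ℚ) ≠ 0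
        norm_num
  · intro n _
    rw [ratQ]
    norm_num
  · have key : ∀ n : ℕ, ((cfP ratA (ratB r) n : ℚ) : ℝ) / ((cfQ ratA (ratB r) n : ℚ) : ℝ)
        = (r : ℝ) * (1 - (1/2 : ℝ) ^ n) := by
      intro n
      rw [ratP, ratQ]
      push_cast
      norm_num
    simp only [key]
    have h2 : Tendsto (fun n : ℕ => (1/2 : ℝ) ^ n) atTop (nhds 0) := by
      apply tendsto_pow_atTop_nhds_zero_of_lt_one <;> norm_num
    have := (tendsto_const_nhds (x := (1:ℝ)).sub h2).const_mul (r : ℝ)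
    simpa using this

/-- The main construction: for rational `α` not a natural number and
rational `z ∈ (-1, 0)`, the number `(1+z)^α` is of CF type. -/
lemma binomial_CFType (α z : ℚ) (hα : ∀ k : ℕ, α ≠ (k : ℚ))
    (hz1 : -1 < z) (hz2 : z < 0) :
    CFType ((1 + (z : ℝ)) ^ ((α : ℚ) : ℝ)) := by
  have hz0 : z ≠ 0 := ne_of_lt hz2
  refine ⟨euA α z, euB α z,
    ⟨Polynomial.C (1 - z) * Polynomial.X ^ 2 + Polynomial.C ((α + 2) * z - 1) * Polynomial.X,
     Polynomial.C (-z) * (Polynomial.X + 1) * Polynomial.X * (Polynomial.X - 1)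
       * (Polynomial.C (α + 1) - Polynomial.X), 2, ?_⟩, ?_, ⟨0, ?_⟩, ?_⟩
  · intro n hn
    obtain ⟨k, rfl⟩ := Nat.exists_eq_add_of_le hn
    rw [Nat.add_comm]
    constructor
    · show ((k : ℚ) + 2) * ((k : ℚ) + 1) + ((k : ℚ) + 2) * (α - k) * z = _
      simp only [Polynomial.eval_add, Polynomial.eval_mul, Polynomial.eval_pow,
        Polynomial.eval_C, Polynomial.eval_X]
      push_cast
      ring
    · show -(((k : ℚ) + 3) * ((k : ℚ) + 2) * ((k : ℚ) + 1) * (α - ((k : ℚ) + 1)) * z) = _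
      simp only [Polynomial.eval_mul, Polynomial.eval_sub, Polynomial.eval_add,
        Polynomial.eval_C, Polynomial.eval_X, Polynomial.eval_one]
      push_cast
      ring
  · intro n
    match n with
    | 0 =>
        show (1 : ℚ) ≠ 0
        norm_num
    | 1 =>
        show -2 * α * z ≠ 0
        have h0 : α ≠ 0 := by simpa using hα 0
        exact mul_ne_zero (mul_ne_zero (by norm_num) h0) hz0
    | (k + 2) =>
        show -(((k : ℚ) + 3) * ((k : ℚ) + 2) * ((k : ℚ) + 1) * (α - ((k : ℚ) + 1)) * z) ≠ 0
        have h1 : α - ((k : ℚ) + 1) ≠ 0 := by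
          have := hα (k + 1)
          push_cast at this
          exact sub_ne_zero.mpr this
        have h2 : ((k : ℚ) + 3) ≠ 0 := by positivity
        have h3 : ((k : ℚ) + 2) ≠ 0 := by positivity
        have h4 : ((k : ℚ) + 1) ≠ 0 := by positivity
        simp only [neg_ne_zero]
        exact mul_ne_zero (mul_ne_zero (mul_ne_zero (mul_ne_zero h2 h3) h4) h1) hz0
  · intro n _
    rw [cfQ_euD]
    exact (euD_pos n).ne'
  · have hαR : ∀ k : ℕ, ((α : ℚ) : ℝ) ≠ (k : ℝ) := by
      intro k h
      exact hα k (by exact_mod_cast h)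
    have hzR : |(z : ℝ)| < 1 := by
      rw [abs_lt]
      constructor <;> [exact_mod_cast hz1; exact_mod_cast hz2.trans zero_lt_one]
    have hsum := (binomial_hasSum hαR hzR).tendsto_sum_nat
    have key : ∀ n : ℕ, ((cfP (euA α z) (euB α z) n : ℚ) : ℝ)
        / ((cfQ (euA α z) (euB α z) n : ℚ) : ℝ)
        = ∑ k ∈ Finset.range n, binCoef ((α : ℚ) : ℝ) k * ((z : ℚ) : ℝ) ^ k := by
      intro n
      rw [cfP_euD, cfQ_euD]
      have hD : ((euD n : ℚ) : ℝ) ≠ 0 := by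
        exact_mod_cast (euD_pos n).ne'
      push_cast
      rw [mul_comm, mul_div_assoc, div_self hD, mul_one]
      exact Finset.sum_congr rfl fun k _ => by rw [← euT_cast]
    simp only [key]
    exact hsum

/-- For rational `u > 0` and rational `a`, the real power `u^a` is of
continued fraction type. -/
theorem rat_rpow_CFType (u a : ℚ) (hu : 0 < u) :
    CFType ((u : ℝ) ^ (a : ℝ)) := by
  by_cases hint : ∃ m : ℤ, a = (m : ℚ)
  · obtain ⟨m, rfl⟩ := hint
    have h : (u : ℝ) ^ (((m : ℚ) : ℚ) : ℝ) = ((u ^ m : ℚ) : ℝ) := by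
      push_cast
      rw [Real.rpow_intCast]
    rw [h]
    exact rat_CFType _ (zpow_ne_zero m hu.ne')
  · have hαgen : ∀ α : ℚ, (¬∃ m : ℤ, α = m) → ∀ k : ℕ, α ≠ (k : ℚ) := by
      intro α h k hk
      exact h ⟨k, by exact_mod_cast hk⟩
    rcases lt_trichotomy u 1 with h1 | h1 | h1
    · have hC := binomial_CFType a (u - 1) (hαgen a hint) (by linarith) (by linarith)
      have e : (1 + ((u - 1 : ℚ) : ℝ)) = (u : ℝ) := by push_cast; ring
      rwa [e] at hC
    · subst h1
      rw [show ((1 : ℚ) : ℝ) = (1 : ℝ) by norm_num, Real.one_rpow]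
      simpa using rat_CFType 1 one_ne_zero
    · have hnk : ∀ k : ℕ, -a ≠ (k : ℚ) := by
        intro k hk
        refine hint ⟨-k, ?_⟩
        push_cast
        linarith [hk]
      have hinv0 : 0 < u⁻¹ := inv_pos.mpr hu
      have hinv1 : u⁻¹ < 1 := by
        rw [inv_lt_one_iff₀]
        right
        exact h1
      have hC := binomial_CFType (-a) (u⁻¹ - 1) hnk (by linarith) (by linarith)
      have e : (1 + ((u⁻¹ - 1 : ℚ) : ℝ)) = ((u : ℝ))⁻¹ := by push_cast; ring
      rw [e] at hC
      have e2 : ((u : ℝ)⁻¹) ^ (((-a : ℚ) : ℚ) : ℝ) = (u : ℝ) ^ ((a : ℚ) : ℝ) := by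
        rw [show (((-a : ℚ) : ℚ) : ℝ) = -((a : ℚ) : ℝ) by push_cast; ring]
        rw [Real.inv_rpow (by positivity : (0 : ℝ) ≤ (u : ℝ)),
          Real.rpow_neg (by positivity : (0 : ℝ) ≤ (u : ℝ)), inv_inv]
      rwa [e2] at hC
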